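/- arXiv:2509.23083 — 3 statements merged into one kernel-verified Lean document; each statement's English description precedes it below -/
import Mathlib

section
/- If there exist real numbers p, q ≥ 0 with p² + q² = 2 such that ((1+ε)/2)^(k/2) + ((1−ε)/2)^(k/2) = p and the relation p² + q² = 2 holds with q = ((1+ε)/2)^(k/2) − ((1−ε)/2)^(k/2), then (1+ε)^k + (1−ε)^k = 2^k; for integer k ≥ 2 and 0 < ε < 1 this is impossible, hence a single measurement M_±(ε', n̂) cannot reproduce k ≥ 2 repeated measurements M_±(ε, n̂)^k unless ε = 0 or ε = 1. -/
noncomputable section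

/-- ε̃₊^(k) = ((1+ε)/2)^(k/2) + ((1−ε)/2)^(k/2). -/
def epsTildePlus (ε : ℝ) (k : ℕ) : ℝ :=
  ((1 + ε) / 2) ^ ((k : ℝ) / 2) + ((1 - ε) / 2) ^ ((k : ℝ) / 2)

/-- ε̃₋^(k) = ((1+ε)/2)^(k/2) − ((1−ε)/2)^(k/2). -/
def epsTildeMinus (ε : ℝ) (k : ℕ) : ℝ :=
  ((1 + ε) / 2) ^ ((k : ℝ) / 2) - ((1 - ε) / 2) ^ ((k : ℝ) / 2)

lemma rpow_half_sq {x : ℝ} (hx : 0 ≤ x) (k : ℕ) :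
    (x ^ ((k : ℝ) / 2)) ^ 2 = x ^ k := by
  rw [← Real.rpow_natCast (x ^ ((k : ℝ) / 2)) 2, ← Real.rpow_mul hx]
  norm_num

lemma key_eq (ε : ℝ) (hε0 : 0 ≤ ε) (hε1 : ε ≤ 1) (k : ℕ) :
    (epsTildePlus ε k) ^ 2 + (epsTildeMinus ε k) ^ 2
      = 2 * (((1 + ε) / 2) ^ k + ((1 - ε) / 2) ^ k) := by
  have hx : (0:ℝ) ≤ (1 + ε) / 2 := by linarith
  have hy : (0:ℝ) ≤ (1 - ε) / 2 := by linarith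
  have h1 := rpow_half_sq hx k
  have h2 := rpow_half_sq hy k
  unfold epsTildePlus epsTildeMinus
  nlinarith [h1, h2]

/-- matching both coefficients of a single measurement requires
(ε̃₊^(k))² + (ε̃₋^(k))² = 2, which is equivalent to (1+ε)^k + (1−ε)^k = 2^k,
and for integer k ≥ 2 and 0 < ε < 1 this is impossible. -/
theorem no_single_measurement (ε : ℝ) (k : ℕ) (hε0 : 0 ≤ ε) (hε1 : ε ≤ 1) (hk : 1 ≤ k) :
    ((epsTildePlus ε k) ^ 2 + (epsTildeMinus ε k) ^ 2 = 2 →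
      (1 + ε) ^ k + (1 - ε) ^ k = (2 : ℝ) ^ k) ∧
    (2 ≤ k → 0 < ε → ε < 1 →
      (epsTildePlus ε k) ^ 2 + (epsTildeMinus ε k) ^ 2 ≠ 2) := by
  have hkey := key_eq ε hε0 hε1 k
  have h2k : (0:ℝ) < 2 ^ k := by positivity
  constructor
  · intro h
    rw [hkey] at h
    have h' : ((1 + ε) / 2) ^ k + ((1 - ε) / 2) ^ k = 1 := by linarith
    have := congrArg (· * (2:ℝ) ^ k) h'
    simp only [div_pow, one_mul] at this
    field_simp at this
    linarith
  · intro hk2 hε0' hε1'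
    rw [hkey]
    have hx0 : (0:ℝ) < (1 + ε) / 2 := by linarith
    have hx1 : (1 + ε) / 2 < 1 := by linarith
    have hy0 : (0:ℝ) < (1 - ε) / 2 := by linarith
    have hy1 : (1 - ε) / 2 < 1 := by linarith
    have hxk : ((1 + ε) / 2) ^ k < (1 + ε) / 2 := by
      calc ((1 + ε) / 2) ^ k ≤ ((1 + ε) / 2) ^ 2 :=
            pow_le_pow_of_le_one hx0.le hx1.le hk2
        _ < (1 + ε) / 2 := by nlinarith
    have hyk : ((1 - ε) / 2) ^ k < (1 - ε) / 2 := by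
      calc ((1 - ε) / 2) ^ k ≤ ((1 - ε) / 2) ^ 2 :=
            pow_le_pow_of_le_one hy0.le hy1.le hk2
        _ < (1 - ε) / 2 := by nlinarith
    intro h
    nlinarith [hxk, hyk]
end
end

section
/- For two single-qubit density matrices ρ and σ (2×2 positive semidefinite matrices with trace 1), the Uhlmann fidelity satisfies F(ρ,σ) = Tr(ρσ) + 2√(det(ρ)·det(σ)). -/
open Matrix
open scoped ComplexOrder

noncomputable section

namespace Matrix.PosSemidef

/-- The positive semidefinite square root of a positive semidefinite matrix
(the definition Mathlib had in December 2024, since removed). -/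
def sqrt {n : Type*} {𝕜 : Type*} [Fintype n] [RCLike 𝕜] [DecidableEq n]
    {A : Matrix n n 𝕜} (hA : A.PosSemidef) : Matrix n n 𝕜 :=
  hA.1.eigenvectorUnitary.1 * diagonal ((↑) ∘ (√·) ∘ hA.1.eigenvalues) *
  (star hA.1.eigenvectorUnitary : Matrix n n 𝕜)

end Matrix.PosSemidef

lemma Matrix.PosSemidef.posSemidef_sqrt {n : Type*} {𝕜 : Type*} [Fintype n] [RCLike 𝕜] [DecidableEq n]
    {A : Matrix n n 𝕜} (hA : A.PosSemidef) : hA.sqrt.PosSemidef := by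
  unfold Matrix.PosSemidef.sqrt
  have h := (posSemidef_diagonal_iff (d := ((↑) ∘ (√·) ∘ hA.1.eigenvalues : n → 𝕜))).mpr
    (fun i => by
      rw [Function.comp_apply, Function.comp_apply, RCLike.ofReal_nonneg]; exact Real.sqrt_nonneg _)
  convert h.mul_mul_conjTranspose_same (hA.1.eigenvectorUnitary : Matrix n n 𝕜) using 1
  simp [star_eq_conjTranspose]

lemma Matrix.PosSemidef.sqrt_mul_self {n : Type*} {𝕜 : Type*} [Fintype n] [RCLike 𝕜] [DecidableEq n]
    {A : Matrix n n 𝕜} (hA : A.PosSemidef) : hA.sqrt * hA.sqrt = A := by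
  let C : Matrix n n 𝕜 := hA.1.eigenvectorUnitary
  let E := diagonal ((↑) ∘ (√·) ∘ hA.1.eigenvalues : n → 𝕜)
  suffices C * (E * (star C * C) * E) * star C = A by
    rw [Matrix.PosSemidef.sqrt]
    simpa only [← mul_assoc] using this
  have : star C * C = 1 := by simp [C]
  rw [this, mul_one]
  have : E * E = diagonal ((↑) ∘ hA.1.eigenvalues) := by
    rw [diagonal_mul_diagonal]
    congr! with v
    simp [← pow_two, ← RCLike.ofReal_pow, Real.sq_sqrt (hA.eigenvalues_nonneg v)]
  rw [this]
  conv_rhs => rw [hA.1.spectral_theorem]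
  simp [C, Unitary.conjStarAlgAut_apply]

lemma psd_det_real {n : Type*} [Fintype n] [DecidableEq n]
    {A : Matrix n n ℂ} (hA : A.PosSemidef) :
    ∃ r : ℝ, 0 ≤ r ∧ A.det = (r : ℂ) := by
  refine ⟨∏ i, hA.1.eigenvalues i, Finset.prod_nonneg fun i _ => hA.eigenvalues_nonneg i, ?_⟩
  rw [hA.1.det_eq_prod_eigenvalues]
  push_cast
  rfl

lemma trace_sq_fin_two (T : Matrix (Fin 2) (Fin 2) ℂ) :
    (T * T).trace = T.trace ^ 2 - 2 * T.det := by
  simp [Matrix.trace, Matrix.det_fin_two, Matrix.mul_apply, Fin.sum_univ_two]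
  ring

/-- for single-qubit density matrices ρ, σ, the Uhlmann fidelity
F(ρ,σ) = (Tr √(√ρ σ √ρ))² equals Tr(ρσ) + 2√(det ρ · det σ).
(√ρ is Hermitian, so √ρᴴ σ √ρ = √ρ σ √ρ.) -/
theorem qubit_fidelity_formula (ρ σ : Matrix (Fin 2) (Fin 2) ℂ)
    (hρ : ρ.PosSemidef) (hσ : σ.PosSemidef) (hρ1 : ρ.trace = 1) (hσ1 : σ.trace = 1) :
    ((hσ.conjTranspose_mul_mul_same hρ.sqrt).sqrt.trace) ^ 2
      = (ρ * σ).trace + 2 * (Real.sqrt (ρ.det.re * σ.det.re) : ℂ) := by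
  have hM := hσ.conjTranspose_mul_mul_same hρ.sqrt
  set S := hρ.sqrt with hS
  set M := Sᴴ * σ * S with hMdef
  set T := hM.sqrt with hT
  have hSH : Sᴴ = S := hρ.posSemidef_sqrt.1
  have hSS : S * S = ρ := hρ.sqrt_mul_self
  have hTT : T * T = M := hM.sqrt_mul_self
  -- trace of M
  have htrM : M.trace = (ρ * σ).trace := by
    rw [hMdef, hSH, Matrix.trace_mul_cycle, hSS]
  -- determinants
  obtain ⟨a, ha0, ha⟩ := psd_det_real hρ
  obtain ⟨b, hb0, hb⟩ := psd_det_real hσ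
  obtain ⟨r, hr0, hr⟩ := psd_det_real hM.posSemidef_sqrt
  have hdetM : M.det = ((a * b : ℝ) : ℂ) := by
    rw [hMdef, hSH, Matrix.det_mul, Matrix.det_mul, mul_comm S.det σ.det, mul_assoc,
      ← Matrix.det_mul, hSS, ha, hb]
    push_cast
    ring
  have hr2 : r ^ 2 = a * b := by
    have h1 : T.det ^ 2 = M.det := by rw [← hTT, Matrix.det_mul, pow_two]
    have : ((r : ℂ)) ^ 2 = ((a * b : ℝ) : ℂ) := by rw [← hr, h1, hdetM]
    exact_mod_cast this
  have hrr : r = Real.sqrt (a * b) := by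
    rw [← hr2, Real.sqrt_sq hr0]
  have hare : ρ.det.re = a := by rw [ha]; simp
  have hbre : σ.det.re = b := by rw [hb]; simp
  have key := trace_sq_fin_two T
  rw [hTT, htrM, hr] at key
  have : T.trace ^ 2 = (ρ * σ).trace + 2 * (r : ℂ) := by linear_combination -key
  rw [this, hare, hbre, hrr]
end
end

section
/- For the Bell state |Φ⁺⟩ = (|00⟩+|11⟩)/√2 evolved by U = SWAP·CNOT after a system measurement M₊(ε,n̂), the product-state-matching conditions force ζ_x = ε n_x, ζ_y = n_y(√(1−ε²)−1)/ε, and ζ_z = [n_z² + (1−n_z²)√(1−ε²)]/(ε n_z); the constraint |ζ⃗| ≤ 1 together with n_x²+n_y²+n_z² = 1 forces ε = 1, and then ζ⃗ = (n_x, −n_y, n_z). -/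
/-- for the Bell state |Φ⁺⟩ evolved by SWAP·CNOT after a system
measurement M₊(ε,n̂), the matching conditions force ζ_x = ε n_x,
ζ_y = n_y(√(1−ε²)−1)/ε, ζ_z = [n_z² + (1−n_z²)√(1−ε²)]/(ε n_z); the constraint
|ζ⃗| ≤ 1 with n̂ a unit vector and n_z ≠ 0 forces ε = 1, in which case
ζ⃗ = (n_x, −n_y, n_z). -/
theorem bell_swap_cnot_forces_projective (ε nx ny nz : ℝ)
    (hε0 : 0 < ε) (hε1 : ε ≤ 1) (hnz : nz ≠ 0) (hn : nx ^ 2 + ny ^ 2 + nz ^ 2 = 1) :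
    (((ε * nx) ^ 2 + (ny * (Real.sqrt (1 - ε ^ 2) - 1) / ε) ^ 2 +
        ((nz ^ 2 + (1 - nz ^ 2) * Real.sqrt (1 - ε ^ 2)) / (ε * nz)) ^ 2 ≤ 1) → ε = 1) ∧
    (ε = 1 →
      ε * nx = nx ∧
      ny * (Real.sqrt (1 - ε ^ 2) - 1) / ε = -ny ∧
      (nz ^ 2 + (1 - nz ^ 2) * Real.sqrt (1 - ε ^ 2)) / (ε * nz) = nz) := by
  constructor
  · intro H
    set s := Real.sqrt (1 - ε ^ 2) with hs
    have h1ε : 0 ≤ 1 - ε ^ 2 := by nlinarith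
    have hs0 : 0 ≤ s := Real.sqrt_nonneg _
    have hs2 : s ^ 2 = 1 - ε ^ 2 := Real.sq_sqrt h1ε
    by_contra hne
    have hεlt : ε < 1 := lt_of_le_of_ne hε1 hne
    have hspos : 0 < s := by
      rw [hs]; exact Real.sqrt_pos.mpr (by nlinarith)
    have hnz2 : 0 < nz ^ 2 := by positivity
    have hε2 : 0 < ε ^ 2 := by positivity
    have hεne : ε ≠ 0 := ne_of_gt hε0
    have H' : (ε * nx) ^ 2 * (ε ^ 2 * nz ^ 2) + (ny * (s - 1)) ^ 2 * nz ^ 2 +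
        (nz ^ 2 + (1 - nz ^ 2) * s) ^ 2 ≤ ε ^ 2 * nz ^ 2 := by
      calc (ε * nx) ^ 2 * (ε ^ 2 * nz ^ 2) + (ny * (s - 1)) ^ 2 * nz ^ 2 +
          (nz ^ 2 + (1 - nz ^ 2) * s) ^ 2
          = ((ε * nx) ^ 2 + (ny * (s - 1) / ε) ^ 2 +
              ((nz ^ 2 + (1 - nz ^ 2) * s) / (ε * nz)) ^ 2) * (ε ^ 2 * nz ^ 2) := by
            field_simp
        _ ≤ 1 * (ε ^ 2 * nz ^ 2) := by
            exact mul_le_mul_of_nonneg_right H (by positivity)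
        _ = ε ^ 2 * nz ^ 2 := one_mul _
    have h1 : ε ^ 2 = 1 - s ^ 2 := by linarith
    have key : (ε * nx) ^ 2 * (ε ^ 2 * nz ^ 2) + (ny * (s - 1)) ^ 2 * nz ^ 2 +
        (nz ^ 2 + (1 - nz ^ 2) * s) ^ 2 - ε ^ 2 * nz ^ 2
        = s ^ 2 + s * (2 + s) * (1 - s) ^ 2 * (nx ^ 2 * nz ^ 2) := by
      linear_combination ((ε ^ 2 + 1 - s ^ 2) * nx ^ 2 * nz ^ 2 - nz ^ 2) * h1 +
        (1 - s) ^ 2 * nz ^ 2 * hn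
    have hs1 : s ≤ 1 := by nlinarith
    have slack : 0 ≤ s * (2 + s) * (1 - s) ^ 2 * (nx ^ 2 * nz ^ 2) := by positivity
    nlinarith [mul_pos hspos hspos]
  · intro h
    subst h
    have : Real.sqrt (1 - 1 ^ 2) = 0 := by norm_num
    rw [this]
    refine ⟨by ring, by ring, ?_⟩
    field_simp
    ring
end
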